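/- arXiv:1810.04620 — 11 statements merged into one kernel-verified Lean document; each statement's English description precedes it below -/
import Mathlib

section
/- For every r ≥ 2, every graph G that is (K_{r-1} plus an isolated vertex)-free and has a vertex whose non-neighborhood has size at least n^((r-2)/(r-1)) contains an independent set of size at least n^(1/(r-1)), where n = |V(G)|. -/
def IsIndep {V : Type} (G : SimpleGraph V) (s : Set V) : Prop :=
  s.Pairwise fun u v => ¬ G.Adj u v

/-- For every `r ≥ 2`, every graph `G` that is `(K_{r-1} ⊎ K_1)`-free (no clique of size `r-1`
together with a vertex non-adjacent to all of it) and has a vertex whose non-neighborhood has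
size at least `n^((r-2)/(r-1))` contains an independent set of size at least `n^(1/(r-1))`.
We assume the Ramsey fact that every `K_{r-1}`-free induced subgraph on `m` vertices has an
independent set of size `m^(1/(r-2))`. -/
theorem stmt1 {V : Type} [Fintype V] [DecidableEq V] (r : ℕ) (hr : 2 ≤ r)
    (G : SimpleGraph V) [DecidableRel G.Adj]
    (hfree : ¬ ∃ (s : Finset V) (v : V), G.IsNClique (r - 1) s ∧ v ∉ s ∧
      ∀ u ∈ s, ¬ G.Adj v u)
    (hRam : ∀ S : Finset V, (∀ t ⊆ S, ¬ G.IsNClique (r - 1) t) →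
      ∃ t ⊆ S, IsIndep G ↑t ∧ (S.card : ℝ) ^ ((1 : ℝ) / ((r : ℝ) - 2)) ≤ (t.card : ℝ))
    (hvertex : ∃ v : V,
      (Fintype.card V : ℝ) ^ (((r : ℝ) - 2) / ((r : ℝ) - 1)) ≤
        ((Finset.univ.filter fun u => u ≠ v ∧ ¬ G.Adj v u).card : ℝ)) :
    ∃ s : Finset V, IsIndep G ↑s ∧
      (Fintype.card V : ℝ) ^ ((1 : ℝ) / ((r : ℝ) - 1)) ≤ (s.card : ℝ) := by
  classical
  obtain ⟨v, hv⟩ := hvertex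
  set S := Finset.univ.filter fun u => u ≠ v ∧ ¬ G.Adj v u with hS
  have hvS : v ∉ S := by simp [hS]
  have hcond : ∀ t ⊆ S, ¬ G.IsNClique (r - 1) t := by
    intro t ht hclq
    exact hfree ⟨t, v, hclq, fun hvt => hvS (ht hvt),
      fun u hu => ((Finset.mem_filter.1 (ht hu)).2.2)⟩
  obtain ⟨t, htS, hindep, hcard⟩ := hRam S hcond
  refine ⟨t, hindep, ?_⟩
  rcases eq_or_lt_of_le hr with h2 | h3
  · exfalso
    have hS1 : (1 : ℝ) ≤ (S.card : ℝ) := by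
      subst h2
      simpa using hv
    have : S.Nonempty := by
      rw [← Finset.card_pos]
      exact_mod_cast lt_of_lt_of_le zero_lt_one hS1
    obtain ⟨u, hu⟩ := this
    refine hfree ⟨{u}, v, ?_, ?_, ?_⟩
    · rw [← h2]
      exact ⟨by simp [SimpleGraph.isClique_iff, Set.pairwise_singleton], by simp⟩
    · simp [Ne.symm (Finset.mem_filter.1 hu).2.1]
    · intro w hw
      rw [Finset.mem_singleton] at hw
      subst hw
      exact (Finset.mem_filter.1 hu).2.2
  · have hr3 : (3 : ℝ) ≤ (r : ℝ) := by exact_mod_cast h3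
    have hn0 : (0 : ℝ) ≤ (Fintype.card V : ℝ) := Nat.cast_nonneg _
    have hS0 : (0 : ℝ) ≤ ((Fintype.card V : ℝ) ^ (((r : ℝ) - 2) / ((r : ℝ) - 1))) :=
      Real.rpow_nonneg hn0 _
    have hexp : (0 : ℝ) ≤ (1 : ℝ) / ((r : ℝ) - 2) := div_nonneg zero_le_one (by linarith)
    have h1 : ((Fintype.card V : ℝ) ^ (((r : ℝ) - 2) / ((r : ℝ) - 1))) ^
        ((1 : ℝ) / ((r : ℝ) - 2)) ≤ (S.card : ℝ) ^ ((1 : ℝ) / ((r : ℝ) - 2)) :=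
      Real.rpow_le_rpow hS0 hv hexp
    have h2 : ((Fintype.card V : ℝ) ^ (((r : ℝ) - 2) / ((r : ℝ) - 1))) ^
        ((1 : ℝ) / ((r : ℝ) - 2)) = (Fintype.card V : ℝ) ^ ((1 : ℝ) / ((r : ℝ) - 1)) := by
      rw [← Real.rpow_mul hn0]
      congr 1
      have h21 : (r : ℝ) - 2 ≠ 0 := by linarith
      have h11 : (r : ℝ) - 1 ≠ 0 := by linarith
      field_simp
    calc (Fintype.card V : ℝ) ^ ((1 : ℝ) / ((r : ℝ) - 1))
        = _ := h2.symm
      _ ≤ (S.card : ℝ) ^ ((1 : ℝ) / ((r : ℝ) - 2)) := h1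
      _ ≤ (t.card : ℝ) := hcard
end

section
/- Let G be a graph in which every vertex has non-degree (number of non-neighbors) at most n^((r-2)/(r-1)) - 1, where n = |V(G)| and r ≥ 2. Then G contains a clique of size at least n^(1/(r-1)). -/
theorem aux_clique {V : Type} [Fintype V] [DecidableEq V] (G : SimpleGraph V)
    [DecidableRel G.Adj] (D : ℝ)
    (hD : ∀ v : V, ((Finset.univ.filter fun u => u ≠ v ∧ ¬ G.Adj v u).card : ℝ) ≤ D - 1) :
    ∀ A : Finset V, ∃ s : Finset V, s ⊆ A ∧ G.IsClique ↑s ∧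
      (A.card : ℝ) ≤ (s.card : ℝ) * D := by
  intro A
  induction A using Finset.strongInduction with
  | _ A ih =>
    rcases A.eq_empty_or_nonempty with rfl | ⟨v, hv⟩
    · exact ⟨∅, by simp, by simp, by simp⟩
    · set A' := A.filter (fun u => u ≠ v ∧ G.Adj v u) with hA'
      have hsub : A' ⊆ A := Finset.filter_subset _ _
      have hvA' : v ∉ A' := by simp [hA']
      have hss : A' ⊂ A := ⟨hsub, fun h => hvA' (h hv)⟩
      obtain ⟨s, hsA, hcl, hcard⟩ := ih A' hss
      have hvs : v ∉ s := fun h => hvA' (hsA h)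
      refine ⟨insert v s, ?_, ?_, ?_⟩
      · intro x hx
        rcases Finset.mem_insert.1 hx with rfl | hx
        · exact hv
        · exact hsub (hsA hx)
      · rw [Finset.coe_insert]
        apply hcl.insert
        intro u hu _
        have h2 := hsA hu
        simp only [hA', Finset.mem_filter] at h2
        exact h2.2.2
      · rw [Finset.card_insert_of_notMem hvs]
        have hdiff : (A \ A').card ≤
            ((Finset.univ.filter fun u => u ≠ v ∧ ¬ G.Adj v u)).card + 1 := by
          have hsub2 : A \ A' ⊆ insert v (Finset.univ.filter fun u => u ≠ v ∧ ¬ G.Adj v u) := by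
            intro u hu
            simp only [Finset.mem_sdiff, hA', Finset.mem_filter] at hu
            by_cases h : u = v
            · simp [h]
            · simp only [Finset.mem_insert, Finset.mem_filter, Finset.mem_univ, true_and]
              exact Or.inr ⟨h, fun hadj => hu.2 ⟨hu.1, h, hadj⟩⟩
          calc (A \ A').card ≤ _ := Finset.card_le_card hsub2
            _ ≤ _ := Finset.card_insert_le _ _
        have hAcard : (A \ A').card + A'.card = A.card :=
          Finset.card_sdiff_add_card_eq_card hsub
        have h1 : ((A \ A').card : ℝ) ≤ D := by
          have := hD v
          have h2 : (((Finset.univ.filter fun u => u ≠ v ∧ ¬ G.Adj v u)).card : ℝ) + 1 ≤ D := by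
            linarith
          calc ((A \ A').card : ℝ) ≤ _ := by exact_mod_cast hdiff
            _ ≤ D := h2
        have h3 : (A.card : ℝ) = ((A \ A').card : ℝ) + (A'.card : ℝ) := by
          exact_mod_cast hAcard.symm
        push_cast
        nlinarith [hcard]

/-- If every vertex of `G` has non-degree at most `n^((r-2)/(r-1)) - 1`, then `G` contains a
clique of size at least `n^(1/(r-1))`. -/
theorem stmt2 {V : Type} [Fintype V] [DecidableEq V] (r : ℕ) (hr : 2 ≤ r)
    (G : SimpleGraph V) [DecidableRel G.Adj]
    (hnondeg : ∀ v : V,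
      ((Finset.univ.filter fun u => u ≠ v ∧ ¬ G.Adj v u).card : ℝ) ≤
        (Fintype.card V : ℝ) ^ (((r : ℝ) - 2) / ((r : ℝ) - 1)) - 1) :
    ∃ s : Finset V, G.IsClique ↑s ∧
      (Fintype.card V : ℝ) ^ ((1 : ℝ) / ((r : ℝ) - 1)) ≤ (s.card : ℝ) := by
  obtain ⟨s, -, hcl, hcard⟩ := aux_clique G _ hnondeg Finset.univ
  rw [Finset.card_univ] at hcard
  refine ⟨s, hcl, ?_⟩
  have hr1 : ((r : ℝ) - 1) ≠ 0 := by
    have : (2 : ℝ) ≤ (r : ℝ) := by exact_mod_cast hr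
    linarith
  rcases Nat.eq_zero_or_pos (Fintype.card V) with h0 | hpos
  · rw [h0]
    push_cast
    rw [Real.zero_rpow (div_ne_zero one_ne_zero hr1)]
    positivity
  · have hn : (0 : ℝ) < (Fintype.card V : ℝ) := by exact_mod_cast hpos
    have hα : (0 : ℝ) < (Fintype.card V : ℝ) ^ (((r : ℝ) - 2) / ((r : ℝ) - 1)) :=
      Real.rpow_pos_of_pos hn _
    have key : (Fintype.card V : ℝ) ^ ((1 : ℝ) / ((r : ℝ) - 1)) *
        (Fintype.card V : ℝ) ^ (((r : ℝ) - 2) / ((r : ℝ) - 1)) = (Fintype.card V : ℝ) := by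
      rw [← Real.rpow_add hn]
      have : (1 : ℝ) / ((r : ℝ) - 1) + ((r : ℝ) - 2) / ((r : ℝ) - 1) = 1 := by
        field_simp
        ring
      rw [this, Real.rpow_one]
    exact le_of_mul_le_mul_right (by rw [key]; exact hcard) hα
end

section
/- Let G be a graph in which every vertex has degree at most n^((r-2)/(r-1)) - 1, where n = |V(G)| and r ≥ 2. Then G contains an independent set of size at least n^(1/(r-1)). -/
lemma greedy_indep {V : Type} [Fintype V] [DecidableEq V] (G : SimpleGraph V)
    [DecidableRel G.Adj] (D : ℝ) (hD : ∀ v : V, (G.degree v : ℝ) + 1 ≤ D) :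
    ∀ s : Finset V, ∃ t : Finset V, t ⊆ s ∧ IsIndep G ↑t ∧ (s.card : ℝ) ≤ t.card * D := by
  intro s
  induction s using Finset.strongInductionOn with
  | _ s ih =>
    rcases s.eq_empty_or_nonempty with rfl | ⟨v, hv⟩
    · exact ⟨∅, Finset.Subset.refl _, by simp [IsIndep], by simp⟩
    · set s' : Finset V := (s.erase v).filter (fun u => ¬ G.Adj v u) with hs'
      have hsub : s' ⊂ s := by
        refine Finset.ssubset_iff_of_subset ?_ |>.2 ⟨v, hv, ?_⟩
        · exact (Finset.filter_subset _ _).trans (Finset.erase_subset _ _)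
        · simp [hs']
      obtain ⟨t, hts, hind, hcard⟩ := ih s' hsub
      have hvt : v ∉ t := fun h => by
        have := hts h
        simp [hs'] at this
      refine ⟨insert v t, ?_, ?_, ?_⟩
      · exact Finset.insert_subset hv (hts.trans ((Finset.filter_subset _ _).trans
          (Finset.erase_subset _ _)))
      · have hsymm : Symmetric (fun u w : V => ¬ G.Adj u w) := fun u w h hadj =>
          h hadj.symm
        unfold IsIndep at hind ⊢
        rw [Finset.coe_insert]
        haveI : Std.Symm (fun u w : V => ¬ G.Adj u w) := ⟨fun a b h => hsymm h⟩
        rw [Set.pairwise_insert_of_symm]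
        refine ⟨hind, fun b hb _ => ?_⟩
        have := hts hb
        simp only [hs', Finset.mem_filter] at this
        exact this.2
      · -- counting
        have hDpos : (0 : ℝ) ≤ D := le_trans (by positivity) (hD v)
        have hsplit : (s.erase v).card ≤ s'.card + G.degree v := by
          have h1 : s.erase v ⊆ s' ∪ G.neighborFinset v := by
            intro u hu
            by_cases hadj : G.Adj v u
            · exact Finset.mem_union_right _ (by simpa using hadj)
            · exact Finset.mem_union_left _ (by simp [hs', hu, hadj])
          calc (s.erase v).card ≤ (s' ∪ G.neighborFinset v).card := Finset.card_le_card h1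
            _ ≤ s'.card + (G.neighborFinset v).card := Finset.card_union_le _ _
            _ = s'.card + G.degree v := by rw [G.card_neighborFinset_eq_degree]
        have hscard : (s.card : ℝ) ≤ s'.card + (G.degree v + 1) := by
          have := Finset.card_erase_add_one hv
          have h2 : s.card ≤ s'.card + G.degree v + 1 := by omega
          exact_mod_cast h2
        have hcardins : ((insert v t).card : ℝ) = t.card + 1 := by
          rw [Finset.card_insert_of_notMem hvt]; push_cast; ring
        rw [hcardins]
        calc (s.card : ℝ) ≤ s'.card + (G.degree v + 1) := hscard
          _ ≤ t.card * D + D := add_le_add hcard (hD v)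
          _ = (t.card + 1) * D := by ring

/-- If every vertex of `G` has degree at most `n^((r-2)/(r-1)) - 1`, then `G` contains an
independent set of size at least `n^(1/(r-1))`. -/
theorem stmt3 {V : Type} [Fintype V] (r : ℕ) (hr : 2 ≤ r)
    (G : SimpleGraph V) [DecidableRel G.Adj]
    (hdeg : ∀ v : V,
      ((G.degree v : ℝ)) ≤ (Fintype.card V : ℝ) ^ (((r : ℝ) - 2) / ((r : ℝ) - 1)) - 1) :
    ∃ s : Finset V, IsIndep G ↑s ∧
      (Fintype.card V : ℝ) ^ ((1 : ℝ) / ((r : ℝ) - 1)) ≤ (s.card : ℝ) := by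
  classical
  have hr1 : (1 : ℝ) ≤ (r : ℝ) - 1 := by
    have : (2 : ℝ) ≤ (r : ℝ) := by exact_mod_cast hr
    linarith
  have hrne : (r : ℝ) - 1 ≠ 0 := by linarith
  set n : ℕ := Fintype.card V with hn
  rcases Nat.eq_zero_or_pos n with h0 | hpos
  · refine ⟨∅, by simp [IsIndep], ?_⟩
    rw [h0]
    simp only [Nat.cast_zero]
    rw [Real.zero_rpow (by positivity : (1:ℝ)/((r:ℝ)-1) ≠ 0)]
    simp
  · have hn1 : (1 : ℝ) ≤ (n : ℝ) := by exact_mod_cast hpos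
    set D : ℝ := (n : ℝ) ^ (((r : ℝ) - 2) / ((r : ℝ) - 1)) with hDdef
    have hD : ∀ v : V, (G.degree v : ℝ) + 1 ≤ D := fun v => by
      have := hdeg v; linarith
    obtain ⟨t, _, hind, hcard⟩ := greedy_indep G D hD Finset.univ
    refine ⟨t, hind, ?_⟩
    have hDpos : 0 < D := Real.rpow_pos_of_pos (by linarith) _
    have hmul : (n : ℝ) ^ ((1 : ℝ) / ((r : ℝ) - 1)) * D = n := by
      rw [hDdef, ← Real.rpow_add (by linarith : (0:ℝ) < n)]
      rw [← add_div]
      have : (1 + ((r : ℝ) - 2)) / ((r : ℝ) - 1) = 1 := by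
        field_simp; ring
      rw [this, Real.rpow_one]
    have huniv : (n : ℝ) ≤ t.card * D := by
      simpa [hn, Finset.card_univ] using hcard
    rw [← hmul] at huniv
    exact le_of_mul_le_mul_right huniv hDpos
end

section
/- Let G be a graph whose vertex set is partitioned into an independent set {x_1,...,x_k} and k-1 pairwise vertex-disjoint nonempty sets C_1,...,C_{k-1}, each inducing a clique, such that G contains no independent set of size k intersecting the union of the C_p's. Then the bipartite 'adjacency pattern' graph B — with parts {x_1,...,x_k} and {C_1,...,C_{k-1}}, and an edge between x_i and C_p whenever x_i has a neighbor in C_p — is connected. -/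
set_option maxHeartbeats 1000000 in
/-- Vertices partitioned into an independent set `{x_1,...,x_k}` and pairwise disjoint nonempty
cliques `C_1,...,C_{k-1}` admitting an independent system of representatives, with no independent
set of size `k` meeting the cliques: then the bipartite adjacency-pattern graph is connected. -/
theorem stmt4 {V : Type} [Fintype V] (G : SimpleGraph V) (k : ℕ) (hk : 1 ≤ k)
    (x : Fin k → V) (hxinj : Function.Injective x)
    (hxind : IsIndep G (Set.range x))
    (C : Fin (k - 1) → Finset V)
    (hCne : ∀ p, (C p).Nonempty)
    (hCcl : ∀ p, G.IsClique ↑(C p))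
    (hCdisj : ∀ p q, p ≠ q → Disjoint (C p) (C q))
    (hxC : ∀ i p, x i ∉ C p)
    (hpart : ∀ v : V, (∃ i, v = x i) ∨ ∃ p, v ∈ C p)
    (hno : ¬ ∃ s : Finset V, IsIndep G ↑s ∧ s.card = k ∧ ∃ v ∈ s, ∃ p, v ∈ C p)
    (c : Fin (k - 1) → V) (hc : ∀ p, c p ∈ C p)
    (hcind : IsIndep G (Set.range c)) :
    (SimpleGraph.fromRel (fun a b : Fin k ⊕ Fin (k - 1) =>
      ∃ i p, a = Sum.inl i ∧ b = Sum.inr p ∧ ∃ w ∈ C p, G.Adj (x i) w)).Connected := by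
  classical
  set B := SimpleGraph.fromRel (fun a b : Fin k ⊕ Fin (k - 1) =>
      ∃ i p, a = Sum.inl i ∧ b = Sum.inr p ∧ ∃ w ∈ C p, G.Adj (x i) w) with hBdef
  have hxc_ne : ∀ i p, x i ≠ c p := fun i p h => hxC i p (h ▸ hc p)
  have hcinj : Function.Injective c := by
    intro p q hpq
    by_contra hne
    exact Finset.disjoint_left.1 (hCdisj p q hne) (hc p) (hpq ▸ hc q)
  -- key counting lemma: for any adjacency-closed, non-full predicate Q,
  -- the number of x-vertices satisfying Q is at most the number of C-vertices satisfying Q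
  have key : ∀ Q : Fin k ⊕ Fin (k-1) → Prop,
      (∀ a b, B.Adj a b → (Q a ↔ Q b)) → (∃ a, ¬ Q a) →
      (Finset.univ.filter (fun i : Fin k => Q (Sum.inl i))).card ≤
      (Finset.univ.filter (fun p : Fin (k-1) => Q (Sum.inr p))).card := by
    intro Q hcl hproper
    by_contra hlt
    push_neg at hlt
    set I := Finset.univ.filter (fun i : Fin k => Q (Sum.inl i)) with hI
    set P := Finset.univ.filter (fun p : Fin (k-1) => Q (Sum.inr p)) with hP
    have hIcard : I.card ≤ k := le_trans (Finset.card_le_univ I) (by simp)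
    have hPcard : P.card ≤ k - 1 := le_trans (Finset.card_le_univ P) (by simp)
    have hPne : P ≠ Finset.univ := by
      intro h
      have hPk : P.card = k - 1 := by rw [h]; simp
      have : I.card = k := by omega
      have hIu : I = Finset.univ := Finset.eq_univ_of_card I (by simp [this])
      obtain ⟨a, ha⟩ := hproper
      cases a with
      | inl i =>
        exact ha (Finset.mem_filter.1 (hIu ▸ Finset.mem_univ i : i ∈ I)).2
      | inr p =>
        exact ha (Finset.mem_filter.1 (h ▸ Finset.mem_univ p : p ∈ P)).2
    obtain ⟨p0, hp0⟩ : ∃ p, p ∉ P := by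
      by_contra hall
      push_neg at hall
      exact hPne (Finset.eq_univ_iff_forall.2 hall)
    set S := I.image x ∪ Pᶜ.image c with hS
    -- cross independence: x i (Q holds) not adjacent to c p (Q fails)
    have hcross : ∀ i ∈ I, ∀ p ∈ Pᶜ, ¬ G.Adj (x i) (c p) := by
      intro i hi p hp hadj
      have hBadj : B.Adj (Sum.inl i) (Sum.inr p) := by
        rw [hBdef, SimpleGraph.fromRel_adj]
        exact ⟨by simp, Or.inl ⟨i, p, rfl, rfl, c p, hc p, hadj⟩⟩
      have hiA : Q (Sum.inl i) := (Finset.mem_filter.1 hi).2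
      have hpA : ¬ Q (Sum.inr p) := by
        intro h
        exact (Finset.mem_compl.1 hp) (Finset.mem_filter.2 ⟨Finset.mem_univ p, h⟩)
      exact hpA ((hcl _ _ hBadj).1 hiA)
    have hSind : IsIndep G ↑S := by
      intro u hu v hv huv
      simp only [hS, Finset.coe_union, Set.mem_union, Finset.coe_image,
        Set.mem_image, Finset.mem_coe] at hu hv
      rcases hu with ⟨i, hi, rfl⟩ | ⟨p, hp, rfl⟩ <;>
        rcases hv with ⟨j, hj, rfl⟩ | ⟨q, hq, rfl⟩
      · exact hxind (Set.mem_range_self i) (Set.mem_range_self j) huv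
      · exact hcross i hi q hq
      · intro hadj; exact hcross j hj p hp hadj.symm
      · exact hcind (Set.mem_range_self p) (Set.mem_range_self q) huv
    have hdisj : Disjoint (I.image x) (Pᶜ.image c) := by
      rw [Finset.disjoint_left]
      rintro a ha hb
      obtain ⟨i, _, rfl⟩ := Finset.mem_image.1 ha
      obtain ⟨p, _, hcp⟩ := Finset.mem_image.1 hb
      exact hxc_ne i p hcp.symm
    have hScard : S.card = I.card + Pᶜ.card := by
      rw [hS, Finset.card_union_of_disjoint hdisj,
        Finset.card_image_of_injective _ hxinj, Finset.card_image_of_injective _ hcinj]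
    have hPc : Pᶜ.card = (k - 1) - P.card := by
      rw [Finset.card_compl]; simp
    have hkS : k ≤ S.card := by omega
    have hcp0S : c p0 ∈ S := by
      apply Finset.mem_union_right
      exact Finset.mem_image_of_mem c (Finset.mem_compl.2 hp0)
    have herase : k - 1 ≤ (S.erase (c p0)).card := by
      rw [Finset.card_erase_of_mem hcp0S]; omega
    obtain ⟨t, ht, htc⟩ := Finset.exists_subset_card_eq herase
    have hcp0t : c p0 ∉ t := fun h => Finset.notMem_erase _ _ (ht h)
    have htS : t ⊆ S := ht.trans (Finset.erase_subset _ _)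
    refine hno ⟨insert (c p0) t, ?_, ?_, c p0, Finset.mem_insert_self _ _, p0, hc p0⟩
    · apply hSind.mono
      rw [Finset.coe_subset]
      exact Finset.insert_subset hcp0S htS
    · rw [Finset.card_insert_of_notMem hcp0t, htc]; omega
  -- main argument
  by_contra hconn
  rw [SimpleGraph.connected_iff] at hconn
  have hne : Nonempty (Fin k ⊕ Fin (k-1)) := ⟨Sum.inl ⟨0, hk⟩⟩
  have hpre : ¬ B.Preconnected := fun h => hconn ⟨h, hne⟩
  rw [SimpleGraph.Preconnected] at hpre
  push_neg at hpre
  obtain ⟨u, v, huv⟩ := hpre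
  have hcl1 : ∀ a b, B.Adj a b → (B.Reachable u a ↔ B.Reachable u b) := by
    intro a b hadj
    exact ⟨fun h => h.trans hadj.reachable, fun h => h.trans hadj.symm.reachable⟩
  have h1 : (@Finset.filter _ (fun i : Fin k => B.Reachable u (Sum.inl i))
        (fun _ => Classical.propDecidable _) Finset.univ).card ≤
      (@Finset.filter _ (fun p : Fin (k-1) => B.Reachable u (Sum.inr p))
        (fun _ => Classical.propDecidable _) Finset.univ).card :=
    key (fun a => B.Reachable u a) hcl1 ⟨v, huv⟩
  have h2 : (@Finset.filter _ (fun i : Fin k => ¬ B.Reachable u (Sum.inl i))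
        (fun _ => Classical.propDecidable _) Finset.univ).card ≤
      (@Finset.filter _ (fun p : Fin (k-1) => ¬ B.Reachable u (Sum.inr p))
        (fun _ => Classical.propDecidable _) Finset.univ).card :=
    key (fun a => ¬ B.Reachable u a) (fun a b hadj => not_congr (hcl1 a b hadj))
      ⟨u, fun h => h (SimpleGraph.Reachable.refl u)⟩
  have hsum1 : (@Finset.filter _ (fun i : Fin k => B.Reachable u (Sum.inl i))
        (fun _ => Classical.propDecidable _) Finset.univ).card +
      (@Finset.filter _ (fun i : Fin k => ¬ B.Reachable u (Sum.inl i))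
        (fun _ => Classical.propDecidable _) Finset.univ).card = k := by
    rw [Finset.card_filter_add_card_filter_not]; simp
  have hsum2 : (@Finset.filter _ (fun p : Fin (k-1) => B.Reachable u (Sum.inr p))
        (fun _ => Classical.propDecidable _) Finset.univ).card +
      (@Finset.filter _ (fun p : Fin (k-1) => ¬ B.Reachable u (Sum.inr p))
        (fun _ => Classical.propDecidable _) Finset.univ).card = k - 1 := by
    rw [Finset.card_filter_add_card_filter_not]; simp
  omega
end

section
/- Let G be a graph, r ≥ 2, and suppose C ⊆ V(G) induces a clique with |C| > r². If G is H-free, where H = K_r minus a star K_{1,r-2} (i.e., K_r with the edges from one vertex to r-2 others removed), then every vertex u ∈ N(C) \ C has at least |C| - (r-3) neighbors in C. -/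
/-- In a `(K_r \ K_{1,r-2})`-free graph, every vertex outside a clique `C` of size `> r²`
having a neighbor in `C` has at least `|C| - (r-3)` neighbors in `C`. -/
theorem stmt5 {V : Type} [Fintype V] [DecidableEq V] (r : ℕ) (hr : 2 ≤ r)
    (G : SimpleGraph V) [DecidableRel G.Adj]
    (hfree : ¬ ∃ (s : Finset V) (u w : V), G.IsNClique (r - 1) s ∧ u ∉ s ∧ w ∈ s ∧
      G.Adj u w ∧ ∀ z ∈ s, z ≠ w → ¬ G.Adj u z)
    (C : Finset V) (hC : G.IsClique ↑C) (hcard : r ^ 2 < C.card) :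
    ∀ u ∉ C, (∃ w ∈ C, G.Adj u w) →
      (C.card : ℤ) - ((r : ℤ) - 3) ≤ ((C.filter fun w => G.Adj u w).card : ℤ) := by
  intro u hu h
  obtain ⟨w, hwC, hadj⟩ := h
  by_contra hlt
  push_neg at hlt
  have hsum : (C.filter fun w => G.Adj u w).card
      + (C.filter fun w => ¬ G.Adj u w).card = C.card :=
    Finset.card_filter_add_card_filter_not _
  have hAge : r - 2 ≤ (C.filter fun w => ¬ G.Adj u w).card := by omega
  obtain ⟨T, hTA, hTcard⟩ := Finset.exists_subset_card_eq hAge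
  have hTC : T ⊆ C := hTA.trans (Finset.filter_subset _ _)
  have hwT : w ∉ T := by
    intro hwT
    exact (Finset.mem_filter.mp (hTA hwT)).2 hadj
  refine hfree ⟨insert w T, u, w, ?_, ?_, Finset.mem_insert_self _ _, hadj, ?_⟩
  · constructor
    · apply hC.subset
      intro x hx
      rcases Finset.mem_insert.mp hx with h | h
      · exact h ▸ hwC
      · exact hTC h
    · rw [Finset.card_insert_of_notMem hwT, hTcard]; omega
  · intro huIn
    rcases Finset.mem_insert.mp huIn with h | h
    · exact G.ne_of_adj hadj h
    · exact hu (hTC h)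
  · intro z hz hzw
    rcases Finset.mem_insert.mp hz with h | h
    · exact absurd h hzw
    · exact (Finset.mem_filter.mp (hTA h)).2
end

section
/- Let G be a connected graph, r ≥ 4, and suppose C ⊆ V(G) induces a clique with |C| > r². If G is (K_r \ K_{1,r-2})-free, then V(G) = C ∪ N(C); that is, every vertex of G is in C or has a neighbor in C. -/
/-- In a connected `(K_r \ K_{1,r-2})`-free graph (`r ≥ 4`) containing a clique `C` of size
`> r²`, every vertex is in `C` or has a neighbor in `C`. -/
theorem stmt6 {V : Type} [Fintype V] [DecidableEq V] (r : ℕ) (hr : 4 ≤ r)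
    (G : SimpleGraph V) (hconn : G.Connected)
    (hfree : ¬ ∃ (s : Finset V) (u w : V), G.IsNClique (r - 1) s ∧ u ∉ s ∧ w ∈ s ∧
      G.Adj u w ∧ ∀ z ∈ s, z ≠ w → ¬ G.Adj u z)
    (C : Finset V) (hC : G.IsClique ↑C) (hcard : r ^ 2 < C.card) :
    ∀ v : V, v ∈ C ∨ ∃ w ∈ C, G.Adj v w := by
  classical
  have hstep : ∀ a b : V, G.Adj a b → (a ∈ C ∨ ∃ w ∈ C, G.Adj a w) →
      (b ∈ C ∨ ∃ w ∈ C, G.Adj b w) := by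
    intro a b hab hPa
    by_cases hbC : b ∈ C
    · exact Or.inl hbC
    by_cases hbN : ∃ w ∈ C, G.Adj b w
    · exact Or.inr hbN
    exfalso
    have haC : a ∉ C := fun h => hbN ⟨a, h, hab.symm⟩
    obtain ⟨c, hcC, hac⟩ := hPa.resolve_left haC
    set N := C.filter (fun z => G.Adj a z) with hNdef
    set M := C.filter (fun z => ¬ G.Adj a z) with hMdef
    have hMcard : M.card ≤ r - 3 := by
      by_contra hcon
      push_neg at hcon
      have hle : r - 2 ≤ M.card := by omega
      obtain ⟨M', hM'sub, hM'card⟩ := Finset.exists_subset_card_eq (s := M) (n := r - 2) hle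
      have hM'C : M' ⊆ C := hM'sub.trans (Finset.filter_subset _ _)
      have hcM' : c ∉ M' := fun h => (Finset.mem_filter.mp (hM'sub h)).2 hac
      refine hfree ⟨insert c M', a, c, ⟨?_, ?_⟩, ?_, Finset.mem_insert_self _ _, hac, ?_⟩
      · intro x hx y hy hxy
        have hxC : x ∈ C := by
          rcases Finset.mem_insert.mp (Finset.mem_coe.mp hx) with h | h
          · exact h ▸ hcC
          · exact hM'C h
        have hyC : y ∈ C := by
          rcases Finset.mem_insert.mp (Finset.mem_coe.mp hy) with h | h
          · exact h ▸ hcC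
          · exact hM'C h
        exact hC (Finset.mem_coe.mpr hxC) (Finset.mem_coe.mpr hyC) hxy
      · rw [Finset.card_insert_of_notMem hcM', hM'card]
        omega
      · intro h
        rcases Finset.mem_insert.mp h with h | h
        · exact G.ne_of_adj hac h
        · exact haC (hM'C h)
      · intro z hz hzc
        have hzM : z ∈ M' := by
          rcases Finset.mem_insert.mp hz with h | h
          · exact absurd h hzc
          · exact h
        exact (Finset.mem_filter.mp (hM'sub hzM)).2
    have hsum : N.card + M.card = C.card :=
      Finset.card_filter_add_card_filter_not (p := fun z => G.Adj a z)
    have hCbig : 2 * r < C.card := by nlinarith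
    have hNcard : r - 2 ≤ N.card := by omega
    obtain ⟨N', hN'sub, hN'card⟩ := Finset.exists_subset_card_eq (s := N) (n := r - 2) hNcard
    have hN'C : N' ⊆ C := hN'sub.trans (Finset.filter_subset _ _)
    have haN' : a ∉ N' := fun h => haC (hN'C h)
    refine hfree ⟨insert a N', b, a, ⟨?_, ?_⟩, ?_, Finset.mem_insert_self _ _, hab.symm, ?_⟩
    · intro x hx y hy hxy
      rcases Finset.mem_insert.mp (Finset.mem_coe.mp hx) with hx' | hx' <;>
        rcases Finset.mem_insert.mp (Finset.mem_coe.mp hy) with hy' | hy'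
      · exact absurd (hx'.trans hy'.symm) hxy
      · subst hx'
        exact (Finset.mem_filter.mp (hN'sub hy')).2
      · subst hy'
        exact ((Finset.mem_filter.mp (hN'sub hx')).2).symm
      · exact hC (Finset.mem_coe.mpr (hN'C hx')) (Finset.mem_coe.mpr (hN'C hy')) hxy
    · rw [Finset.card_insert_of_notMem haN', hN'card]
      omega
    · intro h
      rcases Finset.mem_insert.mp h with h | h
      · exact G.ne_of_adj hab.symm h
      · exact hbC (hN'C h)
    · intro z hz hza
      have hzN : z ∈ N' := by
        rcases Finset.mem_insert.mp hz with h | h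
        · exact absurd h hza
        · exact h
      exact fun hadj => hbN ⟨z, hN'C hzN, hadj⟩
  have hP : ∀ u v : V, G.Walk u v → (u ∈ C ∨ ∃ w ∈ C, G.Adj u w) →
      (v ∈ C ∨ ∃ w ∈ C, G.Adj v w) := by
    intro u v p
    induction p with
    | nil => exact id
    | cons h p ih => exact fun hu => ih (hstep _ _ h hu)
  intro v
  have hpos : 0 < C.card := Nat.lt_of_le_of_lt (Nat.zero_le _) hcard
  obtain ⟨c₀, hc₀⟩ := Finset.card_pos.mp hpos
  obtain ⟨p⟩ := hconn.preconnected c₀ v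
  exact hP _ _ p (Or.inl hc₀)
end

section
/- Let r ≥ 4 and let G be a (K_r \ K_{1,r-2})-free graph containing a clique C with |C| > r². Then for every u ∈ N(C), the graph induced by N(C) \ N[u] is K_{r-2}-free. -/
/-- In a `(K_r \ K_{1,r-2})`-free graph (`r ≥ 4`) with a clique `C` of size `> r²`, for every
`u ∈ N(C)` the graph induced by `N(C) \ N[u]` is `K_{r-2}`-free. -/
theorem stmt7 {V : Type} [Fintype V] [DecidableEq V] (r : ℕ) (hr : 4 ≤ r)
    (G : SimpleGraph V)
    (hfree : ¬ ∃ (s : Finset V) (u w : V), G.IsNClique (r - 1) s ∧ u ∉ s ∧ w ∈ s ∧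
      G.Adj u w ∧ ∀ z ∈ s, z ≠ w → ¬ G.Adj u z)
    (C : Finset V) (hC : G.IsClique ↑C) (hcard : r ^ 2 < C.card) :
    ∀ u : V, (u ∉ C ∧ ∃ w ∈ C, G.Adj u w) →
      ∀ s : Finset V,
        (∀ z ∈ s, (z ∉ C ∧ ∃ w ∈ C, G.Adj z w) ∧ z ≠ u ∧ ¬ G.Adj u z) →
        ¬ G.IsNClique (r - 2) s := by
  classical
  intro u hu s hs hclq
  -- Key: every vertex of N(C) has at most r-3 non-neighbors in C
  have hbad : ∀ z : V, z ∉ C → (∃ w ∈ C, G.Adj z w) →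
      (C.filter (fun c => ¬ G.Adj z c)).card ≤ r - 3 := by
    intro z hzC ⟨w, hwC, hzw⟩
    by_contra hgt
    have hge : r - 2 ≤ (C.filter (fun c => ¬ G.Adj z c)).card := by omega
    obtain ⟨T, hTsub, hTcard⟩ := Finset.exists_subset_card_eq hge
    have hTC : T ⊆ C := hTsub.trans (Finset.filter_subset _ _)
    have hwT : w ∉ T := fun h => (Finset.mem_filter.mp (hTsub h)).2 hzw
    apply hfree
    refine ⟨insert w T, z, w, ⟨?_, ?_⟩, ?_, Finset.mem_insert_self _ _, hzw, ?_⟩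
    · exact hC.subset (by
        intro x hx
        rcases Finset.mem_insert.mp hx with h | h
        · exact h ▸ hwC
        · exact hTC h)
    · rw [Finset.card_insert_of_notMem hwT, hTcard]; omega
    · intro hz
      rcases Finset.mem_insert.mp hz with h | h
      · exact G.ne_of_adj hzw h
      · exact hzC (hTC h)
    · intro y hy hyw
      rcases Finset.mem_insert.mp hy with h | h
      · exact absurd h hyw
      · exact (Finset.mem_filter.mp (hTsub h)).2
  set t : Finset V := insert u s with ht
  have huS : u ∉ s := fun h => (hs u h).2.1 rfl
  have htcard : t.card = r - 1 := by
    rw [ht, Finset.card_insert_of_notMem huS, hclq.card_eq]; omega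
  -- common neighbor of all of t in C
  have hsubset : C.filter (fun c => ¬ ∀ z ∈ t, G.Adj z c) ⊆
      t.biUnion (fun z => C.filter (fun c => ¬ G.Adj z c)) := by
    intro c hc
    rw [Finset.mem_filter] at hc
    push_neg at hc
    obtain ⟨hcC, z, hzt, hnadj⟩ := hc
    exact Finset.mem_biUnion.mpr ⟨z, hzt, Finset.mem_filter.mpr ⟨hcC, hnadj⟩⟩
  have hbadall : ∀ z ∈ t, (C.filter (fun c => ¬ G.Adj z c)).card ≤ r - 3 := by
    intro z hzt
    rcases Finset.mem_insert.mp hzt with h | h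
    · exact h ▸ hbad u hu.1 hu.2
    · exact hbad z ((hs z h).1.1) ((hs z h).1.2)
  have hcount : (C.filter (fun c => ¬ ∀ z ∈ t, G.Adj z c)).card ≤ (r - 1) * (r - 3) := by
    calc (C.filter (fun c => ¬ ∀ z ∈ t, G.Adj z c)).card
        ≤ (t.biUnion (fun z => C.filter (fun c => ¬ G.Adj z c))).card :=
          Finset.card_le_card hsubset
      _ ≤ ∑ z ∈ t, (C.filter (fun c => ¬ G.Adj z c)).card := Finset.card_biUnion_le
      _ ≤ ∑ _z ∈ t, (r - 3) := Finset.sum_le_sum hbadall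
      _ = (r - 1) * (r - 3) := by rw [Finset.sum_const, htcard, smul_eq_mul]
  have hmul : (r - 1) * (r - 3) < r ^ 2 := by
    have : (r - 1) * (r - 3) < r * r :=
      Nat.mul_lt_mul_of_lt_of_le (by omega) (by omega) (by omega)
    calc (r - 1) * (r - 3) < r * r := this
      _ = r ^ 2 := (sq r).symm
  have hpos : 0 < (C.filter (fun c => ∀ z ∈ t, G.Adj z c)).card := by
    have hsplit := Finset.card_filter_add_card_filter_not
      (s := C) (p := fun c => ∀ z ∈ t, G.Adj z c)
    omega
  obtain ⟨c, hc⟩ := Finset.card_pos.mp hpos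
  rw [Finset.mem_filter] at hc
  obtain ⟨hcC, hcadj⟩ := hc
  have hcS : c ∉ s := fun h => (hs c h).1.1 hcC
  apply hfree
  refine ⟨insert c s, u, c, ⟨?_, ?_⟩, ?_, Finset.mem_insert_self _ _, ?_, ?_⟩
  · intro x hx y hy hxy
    simp only [Finset.coe_insert, Set.mem_insert_iff, Finset.mem_coe] at hx hy
    rcases hx with rfl | hx <;> rcases hy with rfl | hy
    · exact absurd rfl hxy
    · exact (hcadj y (Finset.mem_insert_of_mem hy)).symm
    · exact hcadj x (Finset.mem_insert_of_mem hx)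
    · exact hclq.isClique hx hy hxy
  · rw [Finset.card_insert_of_notMem hcS, hclq.card_eq]; omega
  · intro h
    rcases Finset.mem_insert.mp h with h | h
    · exact hu.1 (h ▸ hcC)
    · exact huS h
  · exact hcadj u (Finset.mem_insert_self _ _)
  · intro z hz hzc
    rcases Finset.mem_insert.mp hz with h | h
    · exact absurd h hzc
    · exact (hs z h).2.2
end

section
/- Let r ≥ 4 and G be a (K_r \ K_{1,2})-free graph with a clique C, |C| > r. Let B = {u ∈ N(C) : |N(u) ∩ C| = |C| - 1}. Then the graph induced by C ∪ B is a complete multipartite graph: for u,v ∈ B, if N(u) ∩ C = N(v) ∩ C then uv ∉ E(G), and if N(u) ∩ C ≠ N(v) ∩ C then uv ∈ E(G). -/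
/-- In a `(K_r \ K_{1,2})`-free graph (`r ≥ 4`) with a clique `C`, `|C| > r`: for vertices
`u, v` outside `C` each adjacent to all but one vertex of `C`, if they have the same trace on
`C` they are non-adjacent, and if different traces, they are adjacent (so `C ∪ B` is complete
multipartite). -/
theorem stmt9 {V : Type} [Fintype V] [DecidableEq V] (r : ℕ) (hr : 4 ≤ r)
    (G : SimpleGraph V) [DecidableRel G.Adj]
    (hfree : ¬ ∃ (s : Finset V) (u z₁ z₂ : V), G.IsNClique (r - 1) s ∧ u ∉ s ∧
      z₁ ∈ s ∧ z₂ ∈ s ∧ z₁ ≠ z₂ ∧ ¬ G.Adj u z₁ ∧ ¬ G.Adj u z₂ ∧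
      ∀ z ∈ s, z ≠ z₁ → z ≠ z₂ → G.Adj u z)
    (C : Finset V) (hC : G.IsClique ↑C) (hcard : r < C.card) :
    ∀ u v : V, u ∉ C → v ∉ C → u ≠ v →
      (C.filter fun w => G.Adj u w).card = C.card - 1 →
      (C.filter fun w => G.Adj v w).card = C.card - 1 →
      (((C.filter fun w => G.Adj u w) = (C.filter fun w => G.Adj v w) → ¬ G.Adj u v) ∧
       ((C.filter fun w => G.Adj u w) ≠ (C.filter fun w => G.Adj v w) → G.Adj u v)) := by
  intro u v hu hv huv hcu hcv
  have key : ∀ w : V, w ∉ C → (C.filter fun z => G.Adj w z).card = C.card - 1 →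
      ∃ x ∈ C, ¬ G.Adj w x ∧ (∀ z ∈ C, z ≠ x → G.Adj w z) ∧
        (C.filter fun z => G.Adj w z) = C.erase x := by
    intro w hw hcw
    have hsum := Finset.card_filter_add_card_filter_not
      (s := C) (p := fun z => G.Adj w z)
    have hCpos : 1 ≤ C.card := by omega
    have hone : (C.filter fun z => ¬ G.Adj w z).card = 1 := by omega
    obtain ⟨x, hx⟩ := Finset.card_eq_one.mp hone
    have hxmem : x ∈ C.filter fun z => ¬ G.Adj w z := hx ▸ Finset.mem_singleton_self x
    rw [Finset.mem_filter] at hxmem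
    have hall : ∀ z ∈ C, z ≠ x → G.Adj w z := by
      intro z hz hzx
      by_contra hn
      have : z ∈ C.filter fun z => ¬ G.Adj w z := Finset.mem_filter.mpr ⟨hz, hn⟩
      rw [hx, Finset.mem_singleton] at this
      exact hzx this
    refine ⟨x, hxmem.1, hxmem.2, hall, ?_⟩
    ext z
    simp only [Finset.mem_filter, Finset.mem_erase]
    constructor
    · rintro ⟨hz, hadj⟩
      exact ⟨fun h => hxmem.2 (h ▸ hadj), hz⟩
    · rintro ⟨hzx, hz⟩
      exact ⟨hz, hall z hz hzx⟩
  obtain ⟨x, hxC, hux, hualld, hueq⟩ := key u hu hcu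
  obtain ⟨y, hyC, hvy, hvalld, hveq⟩ := key v hv hcv
  constructor
  · -- same trace ⇒ non-adjacent
    intro heq hadj
    have hxy : x = y := by
      by_contra hne
      rw [hueq, hveq] at heq
      have : y ∈ C.erase x := Finset.mem_erase.mpr ⟨fun h => hne h.symm, hyC⟩
      rw [heq] at this
      exact (Finset.mem_erase.mp this).1 rfl
    have hTcard : r - 3 ≤ (C.erase x).card := by
      rw [Finset.card_erase_of_mem hxC]; omega
    obtain ⟨T, hTsub, hTc⟩ := Finset.exists_subset_card_eq hTcard
    have hTC : T ⊆ C := hTsub.trans (Finset.erase_subset _ _)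
    have hvT : v ∉ T := fun h => hv (hTC h)
    have huT : u ∉ insert v T := by
      simp only [Finset.mem_insert]
      rintro (h | h)
      · exact huv h
      · exact hu (hTC h)
    refine hfree ⟨insert u (insert v T), x, u, v, ⟨?_, ?_⟩, ?_, ?_, ?_, huv, ?_, ?_, ?_⟩
    · -- clique
      intro a ha b hb hab
      simp only [Finset.coe_insert, Set.mem_insert_iff, Finset.mem_coe] at ha hb
      have adjT : ∀ c ∈ T, G.Adj u c ∧ G.Adj v c := by
        intro c hc
        have hcx : c ≠ x := (Finset.mem_erase.mp (hTsub hc)).1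
        exact ⟨hualld c (hTC hc) hcx, hvalld c (hTC hc) (hxy ▸ hcx)⟩
      rcases ha with rfl | rfl | ha <;> rcases hb with rfl | rfl | hb
      · exact absurd rfl hab
      · exact hadj
      · exact (adjT b hb).1
      · exact hadj.symm
      · exact absurd rfl hab
      · exact (adjT b hb).2
      · exact ((adjT a ha).1).symm
      · exact ((adjT a ha).2).symm
      · exact hC (hTC ha) (hTC hb) hab
    · -- card
      rw [Finset.card_insert_of_notMem huT, Finset.card_insert_of_notMem hvT, hTc]
      omega
    · -- x ∉ s
      simp only [Finset.mem_insert]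
      rintro (h | h | h)
      · exact hu (h ▸ hxC)
      · exact hv (h ▸ hxC)
      · exact (Finset.mem_erase.mp (hTsub h)).1 rfl
    · exact Finset.mem_insert_self _ _
    · exact Finset.mem_insert_of_mem (Finset.mem_insert_self _ _)
    · exact fun h => hux h.symm
    · exact fun h => hvy (hxy ▸ h.symm)
    · intro z hz hzu hzv
      simp only [Finset.mem_insert] at hz
      rcases hz with rfl | rfl | hz
      · exact absurd rfl hzu
      · exact absurd rfl hzv
      · exact hC hxC (hTC hz) (fun h => (Finset.mem_erase.mp (hTsub hz)).1 h.symm)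
  · -- different traces ⇒ adjacent
    intro hne
    by_contra hnadj
    have hxy : x ≠ y := fun h => hne (by rw [hueq, hveq, h])
    have hTcard : r - 3 ≤ ((C.erase x).erase y).card := by
      rw [Finset.card_erase_of_mem (Finset.mem_erase.mpr ⟨hxy.symm, hyC⟩),
        Finset.card_erase_of_mem hxC]
      omega
    obtain ⟨T, hTsub, hTc⟩ := Finset.exists_subset_card_eq hTcard
    have hTC : T ⊆ C := fun a ha =>
      Finset.erase_subset _ _ (Finset.erase_subset _ _ (hTsub ha))
    have hTx : ∀ c ∈ T, c ≠ x := fun c hc =>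
      (Finset.mem_erase.mp (Finset.erase_subset _ _ (hTsub hc))).1
    have hTy : ∀ c ∈ T, c ≠ y := fun c hc => (Finset.mem_erase.mp (hTsub hc)).1
    have hxT : x ∉ T := fun h => hTx x h rfl
    have hvx : v ≠ x := fun h => hv (h ▸ hxC)
    have hvs : v ∉ insert x T := by
      simp only [Finset.mem_insert]
      rintro (h | h)
      · exact hvx h
      · exact hv (hTC h)
    refine hfree ⟨insert v (insert x T), u, v, x, ⟨?_, ?_⟩, ?_, ?_, ?_, hvx, hnadj, hux, ?_⟩
    · intro a ha b hb hab
      simp only [Finset.coe_insert, Set.mem_insert_iff, Finset.mem_coe] at ha hb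
      have hvadj : ∀ c, c ∈ C → c ≠ y → G.Adj v c := hvalld
      rcases ha with rfl | rfl | ha <;> rcases hb with rfl | rfl | hb
      · exact absurd rfl hab
      · exact hvadj _ hxC hxy
      · exact hvadj b (hTC hb) (hTy b hb)
      · exact (hvadj _ hxC hxy).symm
      · exact absurd rfl hab
      · exact hC hxC (hTC hb) (fun h => hTx b hb h.symm)
      · exact (hvadj a (hTC ha) (hTy a ha)).symm
      · exact hC (hTC ha) hxC (hTx a ha)
      · exact hC (hTC ha) (hTC hb) hab
    · rw [Finset.card_insert_of_notMem hvs, Finset.card_insert_of_notMem hxT, hTc]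
      omega
    · -- u ∉ s
      simp only [Finset.mem_insert]
      rintro (h | h | h)
      · exact huv h
      · exact hu (h ▸ hxC)
      · exact hu (hTC h)
    · exact Finset.mem_insert_self _ _
    · exact Finset.mem_insert_of_mem (Finset.mem_insert_self _ _)
    · intro z hz hzv hzx
      simp only [Finset.mem_insert] at hz
      rcases hz with rfl | rfl | hz
      · exact absurd rfl hzv
      · exact absurd rfl hzx
      · exact hualld z (hTC hz) (hTx z hz)
end

section
/- Let G be a complete multipartite graph with parts S_1,...,S_m ordered so that |S_1| ≥ ... ≥ |S_m|, together with an additional vertex set D, where every vertex of D has neighbors in at most r-4 of the parts S_i, and m > (k-1)(r-4)+1. Let G' be obtained by deleting all parts S_{q+1},...,S_m where q = (k-1)(r-4)+1. If G has an independent set of size k, then G' has an independent set of size k. -/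
/-- Complete multipartite graph with parts `S_1 ⊇ ... ⊇ S_m` (in size) plus a set `D`, each
vertex of `D` seeing at most `r-4` parts. Deleting the parts beyond the first
`q = (k-1)(r-4)+1` preserves the existence of an independent set of size `k`. -/
theorem stmt10 {V : Type} [Fintype V] [DecidableEq V]
    (G : SimpleGraph V) [DecidableRel G.Adj]
    (r k m : ℕ) (hr : 4 ≤ r) (hk : 1 ≤ k) (hm : (k - 1) * (r - 4) + 1 < m)
    (S : Fin m → Finset V) (D : Finset V)
    (hSne : ∀ i, (S i).Nonempty)
    (hSdisj : ∀ i j, i ≠ j → Disjoint (S i) (S j))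
    (hSD : ∀ i, Disjoint (S i) D)
    (hpart : ∀ v : V, v ∈ D ∨ ∃ i, v ∈ S i)
    (hsorted : ∀ i j : Fin m, i ≤ j → (S j).card ≤ (S i).card)
    (hparts_indep : ∀ i, ∀ u ∈ S i, ∀ v ∈ S i, ¬ G.Adj u v)
    (hcomplete : ∀ i j, i ≠ j → ∀ u ∈ S i, ∀ v ∈ S j, G.Adj u v)
    (hD : ∀ d ∈ D,
      (Finset.univ.filter fun i : Fin m => ∃ w ∈ S i, G.Adj d w).card ≤ r - 4)
    (hex : ∃ s : Finset V, IsIndep G ↑s ∧ s.card = k) :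
    ∃ s : Finset V, IsIndep G ↑s ∧ s.card = k ∧
      ∀ v ∈ s, v ∈ D ∨ ∃ i : Fin m, i.val < (k - 1) * (r - 4) + 1 ∧ v ∈ S i := by
  classical
  obtain ⟨s, hs, hcard⟩ := hex
  set q := (k - 1) * (r - 4) + 1 with hq
  by_cases hP : ∀ v ∈ s, v ∈ D
  · exact ⟨s, hs, hcard, fun v hv => Or.inl (hP v hv)⟩
  push_neg at hP
  obtain ⟨v, hvs, hvD⟩ := hP
  obtain hvd | ⟨i, hvi⟩ := hpart v
  · exact absurd hvd hvD
  -- all non-D vertices of s lie in S i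
  have hall : ∀ u ∈ s, u ∉ D → u ∈ S i := by
    intro u hus huD
    obtain hud | ⟨j, huj⟩ := hpart u
    · exact absurd hud huD
    rcases eq_or_ne j i with rfl | hji
    · exact huj
    rcases eq_or_ne u v with rfl | huv
    · exact absurd huj (Finset.disjoint_left.mp (hSdisj i j (Ne.symm hji)) hvi)
    · exact absurd (hcomplete j i hji u huj v hvi) (hs hus hvs huv)
  by_cases hi : i.val < q
  · refine ⟨s, hs, hcard, fun u hu => ?_⟩
    by_cases huD : u ∈ D
    · exact Or.inl huD
    · exact Or.inr ⟨i, hi, hall u hu huD⟩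
  push_neg at hi
  set sD := s.filter (· ∈ D) with hsD
  set sP := s.filter (· ∉ D) with hsP
  have hsplit : sD.card + sP.card = k := by
    rw [hsD, hsP, Finset.card_filter_add_card_filter_not, hcard]
  have hvP : v ∈ sP := Finset.mem_filter.mpr ⟨hvs, hvD⟩
  have hsDle : sD.card ≤ k - 1 := by
    have : 1 ≤ sP.card := Finset.card_pos.mpr ⟨v, hvP⟩
    omega
  set T := sD.biUnion (fun d => Finset.univ.filter fun j : Fin m => ∃ w ∈ S j, G.Adj d w)
    with hTdef
  have hT : T.card ≤ (k - 1) * (r - 4) := by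
    calc T.card ≤ ∑ d ∈ sD, (Finset.univ.filter fun j : Fin m => ∃ w ∈ S j, G.Adj d w).card :=
          Finset.card_biUnion_le
      _ ≤ sD.card * (r - 4) := by
          rw [← smul_eq_mul]
          exact Finset.sum_le_card_nsmul _ _ _ fun d hd =>
            hD d (Finset.mem_filter.mp hd).2
      _ ≤ (k - 1) * (r - 4) := Nat.mul_le_mul_right _ hsDle
  have hqm : q ≤ m := le_of_lt hm
  set A := (Finset.univ : Finset (Fin q)).image (Fin.castLE hqm) with hA
  have hAcard : A.card = q := by
    rw [hA, Finset.card_image_of_injective _ (Fin.castLE_injective hqm),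
      Finset.card_univ, Fintype.card_fin]
  have hlt : T.card < A.card := by omega
  obtain ⟨j, hjA, hjT⟩ := Finset.not_subset.mp
    (fun hsub => absurd (Finset.card_le_card hsub) (not_le.mpr hlt))
  have hjq : j.val < q := by
    obtain ⟨j0, _, rfl⟩ := Finset.mem_image.mp hjA
    exact j0.isLt
  have hji : j ≤ i := by
    rw [Fin.le_def]; omega
  have hsPsub : sP ⊆ S i := fun u hu =>
    hall u (Finset.mem_filter.mp hu).1 (Finset.mem_filter.mp hu).2
  have hcardS : sP.card ≤ (S j).card :=
    le_trans (Finset.card_le_card hsPsub) (hsorted j i hji)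
  obtain ⟨t, htsub, htcard⟩ := Finset.exists_subset_card_eq hcardS
  have hdisj : Disjoint sD t := by
    refine Finset.disjoint_left.mpr fun u hu hut => ?_
    exact Finset.disjoint_right.mp (hSD j) (Finset.mem_filter.mp hu).2 (htsub hut)
  have hnoadj : ∀ d ∈ sD, ∀ w ∈ S j, ¬ G.Adj d w := by
    intro d hd w hw hadj
    exact hjT (Finset.mem_biUnion.mpr ⟨d, hd, Finset.mem_filter.mpr
      ⟨Finset.mem_univ _, w, hw, hadj⟩⟩)
  refine ⟨sD ∪ t, ?_, ?_, ?_⟩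
  · intro u hu w hw huw
    simp only [Finset.coe_union, Set.mem_union, Finset.mem_coe] at hu hw
    rcases hu with hu | hu <;> rcases hw with hw | hw
    · exact hs (Finset.mem_filter.mp hu).1 (Finset.mem_filter.mp hw).1 huw
    · exact hnoadj u hu w (htsub hw)
    · intro hadj
      exact hnoadj w hw u (htsub hu) hadj.symm
    · exact hparts_indep j u (htsub hu) w (htsub hw)
  · rw [Finset.card_union_of_disjoint hdisj, htcard, hsplit]
  · intro u hu
    rcases Finset.mem_union.mp hu with hu | hu
    · exact Or.inl (Finset.mem_filter.mp hu).2
    · exact Or.inr ⟨j, hjq, htsub hu⟩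
end

section
/- Let A, B, C be three cliques in a graph, pairwise disjoint, each with vertices indexed 1..n, such that the edges between A and B are exactly {a_x b_y : x > y} and the edges between B and C are exactly {b_x c_y : x > y} (half-graphs), with no edges between A and C. Then the graph induced by A ∪ B ∪ C is claw-free. -/
/-- Three disjoint cliques `A`, `B`, `C`, with half-graphs between `A,B` and `B,C` and no
edges between `A` and `C`: the induced graph on `A ∪ B ∪ C` is claw-free. -/
theorem stmt13 {V : Type} (G : SimpleGraph V) (n : ℕ) (a b c : Fin n → V)
    (hab_ne : ∀ x y, a x ≠ b y) (hac_ne : ∀ x y, a x ≠ c y) (hbc_ne : ∀ x y, b x ≠ c y)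
    (haa : ∀ x y, G.Adj (a x) (a y) ↔ x ≠ y)
    (hbb : ∀ x y, G.Adj (b x) (b y) ↔ x ≠ y)
    (hcc : ∀ x y, G.Adj (c x) (c y) ↔ x ≠ y)
    (hab : ∀ x y, G.Adj (a x) (b y) ↔ y < x)
    (hbc : ∀ x y, G.Adj (b x) (c y) ↔ y < x)
    (hac : ∀ x y, ¬ G.Adj (a x) (c y)) :
    ¬ ∃ v u₁ u₂ u₃ : V,
      v ∈ Set.range a ∪ Set.range b ∪ Set.range c ∧
      u₁ ∈ Set.range a ∪ Set.range b ∪ Set.range c ∧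
      u₂ ∈ Set.range a ∪ Set.range b ∪ Set.range c ∧
      u₃ ∈ Set.range a ∪ Set.range b ∪ Set.range c ∧
      u₁ ≠ u₂ ∧ u₁ ≠ u₃ ∧ u₂ ≠ u₃ ∧
      G.Adj v u₁ ∧ G.Adj v u₂ ∧ G.Adj v u₃ ∧
      ¬ G.Adj u₁ u₂ ∧ ¬ G.Adj u₁ u₃ ∧ ¬ G.Adj u₂ u₃ := by
  have hba : ∀ x y, G.Adj (b x) (a y) ↔ x < y := by
    intro x y; rw [G.adj_comm]; exact hab y x
  have hcb : ∀ x y, G.Adj (c x) (b y) ↔ x < y := by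
    intro x y; rw [G.adj_comm]; exact hbc y x
  have hca : ∀ x y, ¬ G.Adj (c x) (a y) := by
    intro x y h; exact hac y x h.symm
  have hba_ne : ∀ x y, b x ≠ a y := fun x y h => hab_ne y x h.symm
  have hca_ne : ∀ x y, c x ≠ a y := fun x y h => hac_ne y x h.symm
  have hcb_ne : ∀ x y, c x ≠ b y := fun x y h => hbc_ne y x h.symm
  rintro ⟨v, u₁, u₂, u₃, hv, h1, h2, h3, e12, e13, e23, hv1, hv2, hv3, hn12, hn13, hn23⟩
  rcases hv with (⟨x, rfl⟩ | ⟨x, rfl⟩) | ⟨x, rfl⟩ <;>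
    rcases h1 with (⟨y, rfl⟩ | ⟨y, rfl⟩) | ⟨y, rfl⟩ <;>
    rcases h2 with (⟨z, rfl⟩ | ⟨z, rfl⟩) | ⟨z, rfl⟩ <;>
    rcases h3 with (⟨w, rfl⟩ | ⟨w, rfl⟩) | ⟨w, rfl⟩ <;>
    simp only [haa, hbb, hcc, hab, hbc, hac, hba, hcb, hca, ne_eq, not_not,
      not_false_eq_true, not_lt, not_true_eq_false]
      at hv1 hv2 hv3 hn12 hn13 hn23 <;>
    first
      | exact hv1 | exact hv2 | exact hv3
      | (subst_vars; first
          | exact e12 rfl | exact e13 rfl | exact e23 rfl | omega)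
end

section
/- Let C_1,...,C_m (m ≥ 3) be pairwise disjoint cliques arranged in a cycle, each with vertices indexed 1..n, where between consecutive cliques C_i and C_{i+1} (indices mod m) the edges are exactly the half-graph {x-th vertex of C_i adjacent to y-th vertex of C_{i+1} iff x > y}, and there are no other edges. If K is an independent set of size m in the union, then K contains exactly one vertex from each clique and all these vertices have the same index. -/
/-- `m ≥ 3` cliques of size `n` arranged in a cycle with forward half-graphs between
consecutive cliques and no other edges: any independent set of size `m` takes exactly one
vertex per clique, all with the same index. -/
theorem stmt14 (m n : ℕ) (hm : 3 ≤ m) (hn : 1 ≤ n)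
    (G : SimpleGraph (Fin m × Fin n))
    (hadj : ∀ (i j : Fin m) (x y : Fin n),
      G.Adj (i, x) (j, y) ↔
        ((i = j ∧ x ≠ y) ∨ (j.val = (i.val + 1) % m ∧ y < x) ∨ (i.val = (j.val + 1) % m ∧ x < y)))
    (K : Finset (Fin m × Fin n)) (hK : IsIndep G ↑K) (hcard : K.card = m) :
    ∃ x₀ : Fin n, K = Finset.univ.image fun i : Fin m => (i, x₀) := by
  have hmpos : 0 < m := by omega
  -- injectivity of fst on K
  have hinj : Set.InjOn Prod.fst (↑K : Set (Fin m × Fin n)) := by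
    intro a ha b hb hab
    by_contra hne
    have hsnd : a.2 ≠ b.2 := by
      intro h; exact hne (Prod.ext hab h)
    have : G.Adj (a.1, a.2) (b.1, b.2) := by
      rw [hadj]; exact Or.inl ⟨hab ▸ rfl, hsnd⟩
    exact hK ha hb hne this
  have himg : K.image Prod.fst = Finset.univ := by
    apply Finset.eq_univ_of_card
    rw [Finset.card_image_of_injOn hinj, hcard, Fintype.card_fin]
  have hsurj : ∀ i : Fin m, ∃ x : Fin n, (i, x) ∈ K := by
    intro i
    have : i ∈ K.image Prod.fst := himg ▸ Finset.mem_univ i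
    obtain ⟨p, hp, hpi⟩ := Finset.mem_image.mp this
    exact ⟨p.2, by rwa [← hpi]⟩
  choose g hg using hsurj
  have huniq : ∀ (i : Fin m) (x : Fin n), (i, x) ∈ K → x = g i := by
    intro i x hx
    have := hinj hx (hg i) rfl
    exact congrArg Prod.snd this
  -- monotone step around the cycle
  have hstep : ∀ i : Fin m, g i ≤ g ⟨(i.val + 1) % m, Nat.mod_lt _ hmpos⟩ := by
    intro i
    set i' : Fin m := ⟨(i.val + 1) % m, Nat.mod_lt _ hmpos⟩ with hi'
    have hne : i ≠ i' := by
      intro h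
      have : i.val = (i.val + 1) % m := by conv_lhs => rw [h]
      rcases Nat.lt_or_ge (i.val + 1) m with hlt | hge
      · rw [Nat.mod_eq_of_lt hlt] at this; omega
      · have h1 : i.val + 1 = m := by have := i.isLt; omega
        rw [h1, Nat.mod_self] at this; omega
    by_contra hlt
    push_neg at hlt
    have hne' : ((i, g i) : Fin m × Fin n) ≠ (i', g i') := by
      intro h; exact hne (congrArg Prod.fst h)
    have : G.Adj (i, g i) (i', g i') := by
      rw [hadj]; exact Or.inr (Or.inl ⟨rfl, hlt⟩)
    exact hK (hg i) (hg i') hne' this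
  -- chain monotonicity
  have hchain : ∀ k : ℕ, ∀ (i : Fin m) (h : i.val + k < m),
      g i ≤ g ⟨i.val + k, h⟩ := by
    intro k
    induction k with
    | zero => intro i h; exact le_of_eq (by congr)
    | succ k ih =>
      intro i h
      have h1 : i.val + k < m := by omega
      refine (ih i h1).trans ?_
      have h2 : ((⟨i.val + k, h1⟩ : Fin m).val + 1) % m = i.val + (k + 1) := by
        simp only []
        rw [Nat.mod_eq_of_lt (by omega)]
        omega
      have := hstep ⟨i.val + k, h1⟩
      have heq : (⟨((⟨i.val + k, h1⟩ : Fin m).val + 1) % m, Nat.mod_lt _ hmpos⟩ : Fin m)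
          = ⟨i.val + (k + 1), h⟩ := Fin.ext h2
      rwa [heq] at this
  have hlast : g ⟨m - 1, by omega⟩ ≤ g ⟨0, hmpos⟩ := by
    have hlt : m - 1 < m := by omega
    have := hstep ⟨m - 1, hlt⟩
    have h2 : ((⟨m - 1, hlt⟩ : Fin m).val + 1) % m = 0 := by
      simp only []
      have hh : m - 1 + 1 = m := by omega
      rw [hh, Nat.mod_self]
    have heq : (⟨((⟨m - 1, hlt⟩ : Fin m).val + 1) % m, Nat.mod_lt _ hmpos⟩ : Fin m)
        = ⟨0, hmpos⟩ := Fin.ext h2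
    rwa [heq] at this
  have hconst : ∀ i : Fin m, g i = g ⟨0, hmpos⟩ := by
    intro i
    have h1 : g ⟨0, hmpos⟩ ≤ g i := by
      have hlt : (⟨0, hmpos⟩ : Fin m).val + i.val < m := by simp only [Nat.zero_add]; exact i.isLt
      have := hchain i.val ⟨0, hmpos⟩ hlt
      have heq : (⟨(⟨0, hmpos⟩ : Fin m).val + i.val, hlt⟩ : Fin m) = i := Fin.ext (by simp)
      rwa [heq] at this
    have h2 : g i ≤ g ⟨m - 1, by omega⟩ := by
      have hlt : i.val + (m - 1 - i.val) < m := by omega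
      have := hchain (m - 1 - i.val) i hlt
      have heq : (⟨i.val + (m - 1 - i.val), hlt⟩ : Fin m) = ⟨m - 1, by omega⟩ :=
        Fin.ext (by simp only []; omega)
      rwa [heq] at this
    exact le_antisymm (h2.trans hlast) h1
  refine ⟨g ⟨0, hmpos⟩, ?_⟩
  ext p
  simp only [Finset.mem_image, Finset.mem_univ, true_and]
  constructor
  · intro hp
    refine ⟨p.1, ?_⟩
    have : p.2 = g p.1 := huniq p.1 p.2 (by simpa using hp)
    rw [← hconst p.1, ← this]
  · rintro ⟨i, rfl⟩
    rw [← hconst i]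
    exact hg i
end
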